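/- For a ∈ ℂ and a finitely supported family Ω = (μ_k)_{k∈ℤ} of complex numbers, the bilinear map Ψ_Ω on W(a,0) defined by Ψ_Ω(L_m, L_n) = Σ_k μ_k I_{m+n+k} and Ψ_Ω(L_m, I_n) = Ψ_Ω(I_n, L_m) = Ψ_Ω(I_m, I_n) = 0 is a symmetric biderivation of W(a,0). -/

import Mathlib

/-- `f` is a biderivation: a derivation in each argument. -/
def IsBiderivation {W : Type*} [LieRing W] (f : W → W → W) : Prop :=
  (∀ x y z : W, f ⁅x, y⁆ z = ⁅x, f y z⁆ + ⁅f x z, y⁆) ∧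
  (∀ x y z : W, f x ⁅y, z⁆ = ⁅f x y, z⁆ + ⁅y, f x z⁆)

/-- A model of the Lie algebra `W(a,b)`: a complex Lie algebra with a basis
`{L m, I m | m : ℤ}` satisfying the defining bracket relations. -/
structure IsWab (a b : ℂ) (W : Type*) [LieRing W] [LieAlgebra ℂ W]
    (L I : ℤ → W) : Prop where
  bracket_LL : ∀ m n : ℤ, ⁅L m, L n⁆ = ((m - n : ℤ) : ℂ) • L (m + n)
  bracket_LI : ∀ m n : ℤ, ⁅L m, I n⁆ = (-((n : ℂ) + a + b * (m : ℂ))) • I (m + n)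
  bracket_II : ∀ m n : ℤ, ⁅I m, I n⁆ = 0
  basis : ∃ B : Module.Basis (ℤ ⊕ ℤ) ℂ W,
    (∀ m : ℤ, B (Sum.inl m) = L m) ∧ (∀ m : ℤ, B (Sum.inr m) = I m)

/-- The map `Ψ_Ω` (given on the basis by `Ψ_Ω(L m, L n) = Σ_k μ_k I (m+n+k)` and
zero on other basis pairs) is a symmetric biderivation of `W(a,0)`. -/
theorem psi_symmetric_biderivation (a : ℂ) (Ω : ℤ →₀ ℂ) {W : Type*}
    [LieRing W] [LieAlgebra ℂ W] (L I : ℤ → W) (hW : IsWab a 0 W L I)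
    (f : W →ₗ[ℂ] W →ₗ[ℂ] W)
    (hLL : ∀ m n : ℤ, f (L m) (L n) = Ω.sum fun k c => c • I (m + n + k))
    (hLI : ∀ m n : ℤ, f (L m) (I n) = 0)
    (hIL : ∀ m n : ℤ, f (I n) (L m) = 0)
    (hII : ∀ m n : ℤ, f (I m) (I n) = 0) :
    (∀ x y : W, f x y = f y x) ∧ IsBiderivation (fun x y => f x y) := by
  obtain ⟨B, hBL, hBI⟩ := hW.basis
  have hLI' : ∀ m n : ℤ, ⁅L m, I n⁆ = (-((n : ℂ) + a)) • I (m + n) := by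
    intro m n; rw [hW.bracket_LI]; ring_nf
  have hIL' : ∀ m n : ℤ, ⁅I n, L m⁆ = ((n : ℂ) + a) • I (m + n) := by
    intro m n
    rw [← lie_skew, hLI' m n, neg_smul, neg_neg]
  have hII' := hW.bracket_II
  have hLL' := hW.bracket_LL
  -- sums under brackets
  have lie_sum : ∀ (x : W) (s : Finset ℤ) (g : ℤ → W),
      ⁅x, s.sum g⁆ = s.sum fun k => ⁅x, g k⁆ := by
    intro x s g
    simpa only [LieAlgebra.ad_apply] using map_sum (LieAlgebra.ad ℂ W x) g s
  have sum_lie : ∀ (x : W) (s : Finset ℤ) (g : ℤ → W),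
      ⁅s.sum g, x⁆ = s.sum fun k => ⁅g k, x⁆ := by
    intro x s g
    rw [← lie_skew, lie_sum, ← Finset.sum_neg_distrib]
    exact Finset.sum_congr rfl fun k _ => lie_skew _ _
  -- induction principle over the basis
  have ind : ∀ {P : W → Prop}, (∀ m, P (L m)) → (∀ m, P (I m)) → P 0 →
      (∀ x y, P x → P y → P (x + y)) → (∀ (c : ℂ) (x), P x → P (c • x)) →
      ∀ x, P x := by
    intro P hL hI h0 hadd hsmul x
    have hx : x ∈ Submodule.span ℂ (Set.range B) := by
      rw [B.span_eq]; exact Submodule.mem_top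
    refine Submodule.span_induction ?_ h0 (fun u v _ _ hu hv => hadd u v hu hv)
      (fun c u _ hu => hsmul c u hu) hx
    rintro u ⟨i, rfl⟩
    rcases i with m | m
    · rw [hBL]; exact hL m
    · rw [hBI]; exact hI m
  -- symmetry
  have hsym : ∀ x y : W, f x y = f y x := by
    refine ind (P := fun x => ∀ y, f x y = f y x) ?_ ?_ ?_ ?_ ?_
    · intro m
      refine ind (P := fun y => f (L m) y = f y (L m)) ?_ ?_ ?_ ?_ ?_
      · intro n; rw [hLL m n, hLL n m, add_comm m n]
      · intro n; rw [hLI m n, hIL m n]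
      · simp
      · intro x y hx hy; simp [map_add, hx, hy]
      · intro c x hx; simp [map_smul, hx]
    · intro m
      refine ind (P := fun y => f (I m) y = f y (I m)) ?_ ?_ ?_ ?_ ?_
      · intro n; rw [hIL n m, hLI n m]
      · intro n; rw [hII m n, hII n m]
      · simp
      · intro x y hx hy; simp [map_add, hx, hy]
      · intro c x hx; simp [map_smul, hx]
    · simp
    · intro x y hx hy z; simp [map_add, hx, hy]
    · intro c x hx z; simp [map_smul, hx]
  -- first biderivation identity
  have hD1 : ∀ x y z : W, f ⁅x, y⁆ z = ⁅x, f y z⁆ + ⁅f x z, y⁆ := by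
    refine ind (P := fun x => ∀ y z, f ⁅x, y⁆ z = ⁅x, f y z⁆ + ⁅f x z, y⁆)
      ?_ ?_ ?_ ?_ ?_
    · intro m
      refine ind (P := fun y => ∀ z, f ⁅L m, y⁆ z = ⁅L m, f y z⁆ + ⁅f (L m) z, y⁆)
        ?_ ?_ ?_ ?_ ?_
      · intro n
        refine ind (P := fun z => f ⁅L m, L n⁆ z = ⁅L m, f (L n) z⁆ + ⁅f (L m) z, L n⁆)
          ?_ ?_ ?_ ?_ ?_
        · intro p
          rw [hLL' m n, map_smul, LinearMap.smul_apply, hLL (m + n) p, hLL n p,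
            hLL m p, Finsupp.sum, Finsupp.sum, Finsupp.sum, lie_sum, sum_lie,
            Finset.smul_sum, ← Finset.sum_add_distrib]
          refine Finset.sum_congr rfl fun k _ => ?_
          rw [lie_smul, smul_lie, hLI' m (n + p + k), hIL' n (m + p + k)]
          have e1 : m + (n + p + k) = m + n + p + k := by ring
          have e2 : n + (m + p + k) = m + n + p + k := by ring
          rw [e1, e2]
          push_cast
          module
        · intro p
          simp [hLL' m n, map_smul, hLI, hII', hIL, Finsupp.sum, lie_sum, sum_lie,
            hLL]
        · simp
        · intro x y hx hy
          simp only [map_add, lie_add, add_lie, LinearMap.add_apply, hx, hy]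
          abel
        · intro c x hx
          simp only [map_smul, lie_smul, smul_lie, LinearMap.smul_apply, hx, smul_add]
      · intro n
        refine ind (P := fun z => f ⁅L m, I n⁆ z = ⁅L m, f (I n) z⁆ + ⁅f (L m) z, I n⁆)
          ?_ ?_ ?_ ?_ ?_
        · intro p
          simp [hLI' m n, map_smul, hIL, hLL, Finsupp.sum, sum_lie, smul_lie, hII']
        · intro p
          simp [hLI' m n, map_smul, hII, hLI]
        · simp
        · intro x y hx hy
          simp only [map_add, lie_add, add_lie, LinearMap.add_apply, hx, hy]
          abel
        · intro c x hx
          simp only [map_smul, lie_smul, smul_lie, LinearMap.smul_apply, hx, smul_add]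
      · intro z; simp
      · intro x y hx hy z
        simp only [map_add, lie_add, add_lie, LinearMap.add_apply, hx, hy]
        abel
      · intro c x hx z
        simp only [map_smul, lie_smul, smul_lie, LinearMap.smul_apply, hx, smul_add]
    · intro m
      refine ind (P := fun y => ∀ z, f ⁅I m, y⁆ z = ⁅I m, f y z⁆ + ⁅f (I m) z, y⁆)
        ?_ ?_ ?_ ?_ ?_
      · intro n
        refine ind (P := fun z => f ⁅I m, L n⁆ z = ⁅I m, f (L n) z⁆ + ⁅f (I m) z, L n⁆)
          ?_ ?_ ?_ ?_ ?_
        · intro p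
          simp [hIL' n m, map_smul, hIL, hLL, Finsupp.sum, lie_sum, lie_smul, hII']
        · intro p
          simp [hIL' n m, map_smul, hII, hLI, hIL]
        · simp
        · intro x y hx hy
          simp only [map_add, lie_add, add_lie, LinearMap.add_apply, hx, hy]
          abel
        · intro c x hx
          simp only [map_smul, lie_smul, smul_lie, LinearMap.smul_apply, hx, smul_add]
      · intro n
        refine ind (P := fun z => f ⁅I m, I n⁆ z = ⁅I m, f (I n) z⁆ + ⁅f (I m) z, I n⁆)
          ?_ ?_ ?_ ?_ ?_
        · intro p; simp [hII', hII, hIL]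
        · intro p; simp [hII', hII]
        · simp [hII']
        · intro x y hx hy
          simp only [map_add, lie_add, add_lie, LinearMap.add_apply, hx, hy]
          abel
        · intro c x hx
          simp only [map_smul, lie_smul, smul_lie, LinearMap.smul_apply, hx, smul_add]
      · intro z; simp
      · intro x y hx hy z
        simp only [map_add, lie_add, add_lie, LinearMap.add_apply, hx, hy]
        abel
      · intro c x hx z
        simp only [map_smul, lie_smul, smul_lie, LinearMap.smul_apply, hx, smul_add]
    · intro y z; simp
    · intro x y hx hy u z
      simp only [map_add, lie_add, add_lie, LinearMap.add_apply, hx, hy]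
      abel
    · intro c x hx u z
      simp only [map_smul, lie_smul, smul_lie, LinearMap.smul_apply, hx, smul_add]
  refine ⟨hsym, hD1, ?_⟩
  intro x y z
  show f x ⁅y, z⁆ = ⁅f x y, z⁆ + ⁅y, f x z⁆
  rw [hsym x ⁅y, z⁆, hD1 y z x, hsym y x, hsym z x]
  abel
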